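/- For any graph G with no isolated vertex, ∂_{2p}(G) ≤ ρ(G)·(δ(G) - 1) + 2m(G) - n(G)·δ(G), where m(G) is the number of edges and n(G) the number of vertices; moreover equality holds if and only if there exists a maximum 2-packing S such that every vertex outside S has degree δ(G). -/
import Mathlib


open Finset

variable {V : Type*}

/-- `S` is a 2-packing: closed neighbourhoods of distinct vertices of `S` are disjoint. -/
def IsPacking2 (G : SimpleGraph V) (S : Finset V) : Prop :=
  (S : Set V).Pairwise fun u v =>
    Disjoint (G.neighborSet u ∪ {u}) (G.neighborSet v ∪ {v})

/-- The external neighbourhood of `S`: vertices outside `S` with a neighbour in `S`. -/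
def extN (G : SimpleGraph V) [Fintype V] [DecidableEq V] [DecidableRel G.Adj]
    (S : Finset V) : Finset V :=
  Finset.univ.filter fun v => v ∉ S ∧ ∃ u ∈ S, G.Adj u v

/-- The differential of a set `S`: `|N_e(S)| - |S|`. -/
def diffSet (G : SimpleGraph V) [Fintype V] [DecidableEq V] [DecidableRel G.Adj]
    (S : Finset V) : ℤ :=
  ((extN G S).card : ℤ) - S.card

/-- The 2-packing differential of `G`. -/
noncomputable def pdiff2 (G : SimpleGraph V) [Fintype V] [DecidableEq V]
    [DecidableRel G.Adj] : ℤ :=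
  sSup {d : ℤ | ∃ S : Finset V, IsPacking2 G S ∧ d = diffSet G S}

/-- The packing number of `G`: maximum cardinality of a 2-packing. -/
noncomputable def packNum (G : SimpleGraph V) [Fintype V] : ℕ :=
  sSup {n : ℕ | ∃ S : Finset V, IsPacking2 G S ∧ n = S.card}

/-- `G` has no isolated vertex. -/
def NoIsolated (G : SimpleGraph V) : Prop := ∀ v : V, ∃ u, G.Adj v u

/-- `S` is a dominating set of `G`. -/
def IsDom (G : SimpleGraph V) (S : Finset V) : Prop :=
  ∀ v, v ∉ S → ∃ u ∈ S, G.Adj u v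

section Helpers

variable [Fintype V] [DecidableEq V] {G : SimpleGraph V} [DecidableRel G.Adj]

lemma packing_empty (G : SimpleGraph V) : IsPacking2 G (∅ : Finset V) := by
  simp [IsPacking2]

lemma packing_disjoint {S : Finset V} (hS : IsPacking2 G S) {u v : V}
    (hu : u ∈ S) (hv : v ∈ S) (huv : u ≠ v) :
    Disjoint (insert u (G.neighborFinset u)) (insert v (G.neighborFinset v)) := by
  have h := hS (by exact_mod_cast hu) (by exact_mod_cast hv) huv
  rw [← Finset.disjoint_coe]
  simpa [Set.union_comm, SimpleGraph.neighborFinset_def, Set.coe_toFinset] using h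

lemma extN_eq_biUnion {S : Finset V} (hS : IsPacking2 G S) :
    extN G S = S.biUnion (fun u => G.neighborFinset u) := by
  ext v
  simp only [extN, Finset.mem_filter, Finset.mem_univ, true_and, Finset.mem_biUnion,
    SimpleGraph.mem_neighborFinset]
  constructor
  · rintro ⟨-, u, hu, hadj⟩; exact ⟨u, hu, hadj⟩
  · rintro ⟨u, hu, hadj⟩
    refine ⟨fun hv => ?_, u, hu, hadj⟩
    have huv : u ≠ v := G.ne_of_adj hadj
    have hd := packing_disjoint hS hu hv huv
    exact (Finset.disjoint_left.1 hd)
      (Finset.mem_insert_of_mem ((SimpleGraph.mem_neighborFinset G u v).2 hadj))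
      (Finset.mem_insert_self v _)

lemma card_extN {S : Finset V} (hS : IsPacking2 G S) :
    (extN G S).card = ∑ u ∈ S, G.degree u := by
  rw [extN_eq_biUnion hS, Finset.card_biUnion]
  · rfl
  · intro u hu v hv huv
    exact Finset.disjoint_of_subset_left (Finset.subset_insert _ _)
      (Finset.disjoint_of_subset_right (Finset.subset_insert _ _)
        (packing_disjoint hS hu hv huv))


/-- Closed neighbourhood as a finset. -/
abbrev CN (G : SimpleGraph V) [DecidableRel G.Adj] [Fintype V] (v : V) : Finset V :=
  insert v (G.neighborFinset v)

lemma packing_of_CN {S : Finset V}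
    (h : ∀ u ∈ S, ∀ v ∈ S, u ≠ v → Disjoint (CN G u) (CN G v)) : IsPacking2 G S := by
  intro u hu v hv huv
  have := h u (by exact_mod_cast hu) v (by exact_mod_cast hv) huv
  rw [← Finset.disjoint_coe] at this
  simpa [Set.union_comm, SimpleGraph.neighborFinset_def, Set.coe_toFinset] using this

lemma packing_CN {S : Finset V} (hS : IsPacking2 G S) {u v : V}
    (hu : u ∈ S) (hv : v ∈ S) (huv : u ≠ v) : Disjoint (CN G u) (CN G v) :=
  packing_disjoint hS hu hv huv

lemma mem_CN_comm {u v : V} : u ∈ CN G v ↔ v ∈ CN G u := by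
  simp only [CN, Finset.mem_insert, SimpleGraph.mem_neighborFinset]
  constructor
  · rintro (rfl | h); · exact Or.inl rfl
    · exact Or.inr h.symm
  · rintro (rfl | h); · exact Or.inl rfl
    · exact Or.inr h.symm

/-- The extension lemma, used in the `minDegree = 1` equality case. -/
lemma exists_big_packing {S T : Finset V} (hS : IsPacking2 G S) (hT : IsPacking2 G T)
    (hdeg : ∀ v ∉ S, G.degree v = 1) :
    ∃ S', IsPacking2 G S' ∧ S ⊆ S' ∧ T.card ≤ S'.card := by
  classical
  have key : ∀ t ∈ T, ∀ s ∈ S, ¬ Disjoint (CN G t) (CN G s) → t ∈ CN G s := by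
    intro t ht s hs hnd
    obtain ⟨x, hxt, hxs⟩ := Finset.not_disjoint_iff.1 hnd
    rcases Finset.mem_insert.1 hxt with rfl | hxt
    · -- x = t
      rcases Finset.mem_insert.1 hxs with rfl | hxs
      · exact Finset.mem_insert_self _ _
      · exact Finset.mem_insert_of_mem hxs
    · rcases Finset.mem_insert.1 hxs with hxeq | hxs
      · -- x = s, s ∈ N(t)
        have : G.Adj s t := hxeq ▸ ((SimpleGraph.mem_neighborFinset G t x).1 hxt).symm
        exact Finset.mem_insert_of_mem ((SimpleGraph.mem_neighborFinset G s t).2 this)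
      · -- x ∈ N(t), x ∈ N(s)
        have hadjt : G.Adj t x := (SimpleGraph.mem_neighborFinset G t x).1 hxt
        have hadjs : G.Adj s x := (SimpleGraph.mem_neighborFinset G s x).1 hxs
        have hxS : x ∉ S := by
          intro hxS
          rcases eq_or_ne x s with rfl | hxsne
          · exact G.irrefl hadjs
          · exact (Finset.disjoint_left.1 (packing_CN hS hxS hs hxsne))
              (Finset.mem_insert_self _ _)
              (Finset.mem_insert_of_mem ((SimpleGraph.mem_neighborFinset G s x).2 hadjs))
        have hdx : (G.neighborFinset x).card = 1 := by
          rw [SimpleGraph.card_neighborFinset_eq_degree]; exact hdeg x hxS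
        obtain ⟨a, ha⟩ := Finset.card_eq_one.1 hdx
        have hta : t ∈ G.neighborFinset x := by
          rw [SimpleGraph.mem_neighborFinset]; exact hadjt.symm
        have hsa : s ∈ G.neighborFinset x := by
          rw [SimpleGraph.mem_neighborFinset]; exact hadjs.symm
        rw [ha, Finset.mem_singleton] at hta hsa
        have : t = s := hta.trans hsa.symm
        subst this
        exact Finset.mem_insert_self _ _
  set good := T.filter (fun t => ∀ s ∈ S, Disjoint (CN G t) (CN G s)) with hgood
  have hdisj : Disjoint S good := by
    rw [Finset.disjoint_right]
    intro t htg hts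
    have := (Finset.mem_filter.1 htg).2 t hts
    exact (Finset.disjoint_left.1 this) (Finset.mem_insert_self _ _)
      (Finset.mem_insert_self _ _)
  refine ⟨S ∪ good, ?_, Finset.subset_union_left, ?_⟩
  · apply packing_of_CN
    intro u hu v hv huv
    rcases Finset.mem_union.1 hu with hu | hu <;> rcases Finset.mem_union.1 hv with hv | hv
    · exact packing_CN hS hu hv huv
    · exact ((Finset.mem_filter.1 hv).2 u hu).symm
    · exact (Finset.mem_filter.1 hu).2 v hv
    · exact packing_CN hT (Finset.mem_filter.1 hu).1 (Finset.mem_filter.1 hv).1 huv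
  · -- cardinality
    have hgsub : good ⊆ T := Finset.filter_subset _ _
    have hbad : (T \ good).card ≤ S.card := by
      have hchoice : ∀ t ∈ T \ good, ∃ s, s ∈ S ∧ ¬ Disjoint (CN G t) (CN G s) := by
        intro t ht
        have h2 := (Finset.mem_sdiff.1 ht).2
        rw [hgood, Finset.mem_filter] at h2
        push_neg at h2
        obtain ⟨s, hs, hnd⟩ := h2 (Finset.mem_sdiff.1 ht).1
        exact ⟨s, hs, hnd⟩
      set f : V → V := fun t =>
        if h : ∃ s, s ∈ S ∧ ¬ Disjoint (CN G t) (CN G s) then h.choose else t with hf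
      apply Finset.card_le_card_of_injOn f
      · intro t ht
        obtain ⟨s, hs, hnd⟩ := hchoice t ht
        have hex : ∃ s, s ∈ S ∧ ¬ Disjoint (CN G t) (CN G s) := ⟨s, hs, hnd⟩
        simp only [hf, dif_pos hex]
        exact hex.choose_spec.1
      · intro t1 ht1 t2 ht2 hft
        by_contra hne
        obtain ⟨s1, hs1, hnd1⟩ := hchoice t1 (by exact_mod_cast ht1)
        obtain ⟨s2, hs2, hnd2⟩ := hchoice t2 (by exact_mod_cast ht2)
        have hex1 : ∃ s, s ∈ S ∧ ¬ Disjoint (CN G t1) (CN G s) := ⟨s1, hs1, hnd1⟩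
        have hex2 : ∃ s, s ∈ S ∧ ¬ Disjoint (CN G t2) (CN G s) := ⟨s2, hs2, hnd2⟩
        simp only [hf, dif_pos hex1, dif_pos hex2] at hft
        set s := hex1.choose with hsdef
        have hS1 := hex1.choose_spec
        have hS2 := hex2.choose_spec
        have ht1T : t1 ∈ T := (Finset.mem_sdiff.1 (by exact_mod_cast ht1)).1
        have ht2T : t2 ∈ T := (Finset.mem_sdiff.1 (by exact_mod_cast ht2)).1
        have hk1 : t1 ∈ CN G s := key t1 ht1T s hS1.1 hS1.2
        have hk2 : t2 ∈ CN G s := by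
          have := key t2 ht2T _ hS2.1 hS2.2
          rwa [← hft] at this
        have hs1' : s ∈ CN G t1 := mem_CN_comm.1 hk1
        have hs2' : s ∈ CN G t2 := mem_CN_comm.1 hk2
        exact (Finset.disjoint_left.1 (packing_CN hT ht1T ht2T hne)) hs1' hs2'
    have hTcard : T.card = (T \ good).card + good.card := by
      rw [Finset.card_sdiff_of_subset hgsub]
      have := Finset.card_le_card hgsub
      omega

    rw [Finset.card_union_of_disjoint hdisj, hTcard]
    have : good.card ≤ T.card := Finset.card_le_card hgsub
    omega


lemma packNum_bddAbove (G : SimpleGraph V) :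
    BddAbove {n : ℕ | ∃ S : Finset V, IsPacking2 G S ∧ n = S.card} := by
  refine ⟨Fintype.card V, ?_⟩
  rintro n ⟨S, -, rfl⟩
  simpa using Finset.card_le_univ S

lemma packNum_nonempty (G : SimpleGraph V) :
    Set.Nonempty {n : ℕ | ∃ S : Finset V, IsPacking2 G S ∧ n = S.card} :=
  ⟨0, ∅, packing_empty G, rfl⟩

lemma card_le_packNum {S : Finset V} (hS : IsPacking2 G S) : S.card ≤ packNum G :=
  le_csSup (packNum_bddAbove G) ⟨S, hS, rfl⟩

lemma exists_packNum (G : SimpleGraph V) [DecidableRel G.Adj] :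
    ∃ T : Finset V, IsPacking2 G T ∧ T.card = packNum G := by
  obtain ⟨T, hT, h⟩ := Nat.sSup_mem (packNum_nonempty G) (packNum_bddAbove G)
  exact ⟨T, hT, h.symm⟩

/-- The fundamental identity. -/
lemma diff_identity {S : Finset V} (hS : IsPacking2 G S) :
    (packNum G : ℤ) * ((G.minDegree : ℤ) - 1)
        + 2 * G.edgeFinset.card - (Fintype.card V : ℤ) * G.minDegree
      = diffSet G S + ((packNum G : ℤ) - S.card) * ((G.minDegree : ℤ) - 1)
        + ((∑ v ∈ Sᶜ, (G.degree v : ℤ)) - (Sᶜ.card : ℤ) * G.minDegree) := by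
  have h1 : diffSet G S = (∑ u ∈ S, (G.degree u : ℤ)) - S.card := by
    rw [diffSet, card_extN hS]
    push_cast
    ring
  have h2 : (∑ u ∈ S, (G.degree u : ℤ)) + ∑ v ∈ Sᶜ, (G.degree v : ℤ)
      = 2 * G.edgeFinset.card := by
    rw [Finset.sum_add_sum_compl]
    exact_mod_cast G.sum_degrees_eq_twice_card_edges
  have h3 : (Sᶜ.card : ℤ) = (Fintype.card V : ℤ) - S.card := by
    rw [Finset.card_compl]
    have := Finset.card_le_univ S
    push_cast [Nat.cast_sub (by simpa using this)]
    simp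
  rw [h1, h3]
  linarith [h2]

lemma term2_nonneg (G : SimpleGraph V) [DecidableRel G.Adj] (S : Finset V) :
    0 ≤ (∑ v ∈ Sᶜ, (G.degree v : ℤ)) - (Sᶜ.card : ℤ) * G.minDegree := by
  have := Finset.card_nsmul_le_sum Sᶜ (fun v => G.degree v) G.minDegree
    (fun v _ => G.minDegree_le_degree v)
  rw [smul_eq_mul] at this
  have : ((Sᶜ.card * G.minDegree : ℕ) : ℤ) ≤ ((∑ v ∈ Sᶜ, G.degree v : ℕ) : ℤ) := by
    exact_mod_cast this
  push_cast at this
  linarith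

lemma term1_nonneg (h : NoIsolated G) {S : Finset V} (hS : IsPacking2 G S) :
    0 ≤ ((packNum G : ℤ) - S.card) * ((G.minDegree : ℤ) - 1) := by
  cases isEmpty_or_nonempty V with
  | inl hV =>
    have hS0 : S.card = 0 := by simp [Finset.eq_empty_of_isEmpty S]
    have hp0 : packNum G = 0 := by
      apply Nat.le_antisymm _ (Nat.zero_le _)
      apply csSup_le (packNum_nonempty G)
      rintro n ⟨S', -, rfl⟩
      simp [Finset.eq_empty_of_isEmpty S']
    rw [hS0, hp0]
    simp
  | inr hV =>
    have hδ : 1 ≤ G.minDegree := by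
      obtain ⟨v, hv⟩ := G.exists_minimal_degree_vertex
      rw [hv]
      have : 0 < G.degree v := by
        rw [SimpleGraph.degree_pos_iff_exists_adj]
        exact h v
      omega
    have h1 : (S.card : ℤ) ≤ packNum G := by exact_mod_cast card_le_packNum hS
    have h2 : (1 : ℤ) ≤ G.minDegree := by exact_mod_cast hδ
    nlinarith

lemma diff_le (h : NoIsolated G) {S : Finset V} (hS : IsPacking2 G S) :
    diffSet G S ≤ (packNum G : ℤ) * ((G.minDegree : ℤ) - 1)
        + 2 * G.edgeFinset.card - (Fintype.card V : ℤ) * G.minDegree := by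
  have := diff_identity hS
  have h1 := term1_nonneg h hS
  have h2 := term2_nonneg G S
  linarith

lemma pdiff2_set_finite (G : SimpleGraph V) [DecidableRel G.Adj] :
    {d : ℤ | ∃ S : Finset V, IsPacking2 G S ∧ d = diffSet G S}.Finite := by
  have : {d : ℤ | ∃ S : Finset V, IsPacking2 G S ∧ d = diffSet G S}
      ⊆ (fun S : Finset V => diffSet G S) '' Set.univ := by
    rintro d ⟨S, -, rfl⟩
    exact ⟨S, Set.mem_univ S, rfl⟩
  exact Set.Finite.subset (Set.Finite.image _ (Set.finite_univ)) this

lemma pdiff2_set_nonempty (G : SimpleGraph V) [DecidableRel G.Adj] :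
    {d : ℤ | ∃ S : Finset V, IsPacking2 G S ∧ d = diffSet G S}.Nonempty :=
  ⟨diffSet G ∅, ∅, packing_empty G, rfl⟩

end Helpers

theorem stmt7 {V : Type*} [Fintype V] [DecidableEq V] (G : SimpleGraph V)
    [DecidableRel G.Adj] (h : NoIsolated G) :
    pdiff2 G ≤ (packNum G : ℤ) * ((G.minDegree : ℤ) - 1)
        + 2 * G.edgeFinset.card - (Fintype.card V : ℤ) * G.minDegree ∧
      (pdiff2 G = (packNum G : ℤ) * ((G.minDegree : ℤ) - 1)
          + 2 * G.edgeFinset.card - (Fintype.card V : ℤ) * G.minDegree ↔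
        ∃ S : Finset V, IsPacking2 G S ∧ S.card = packNum G ∧
          ∀ v, v ∉ S → G.degree v = G.minDegree) := by
  classical
  have hbdd : BddAbove {d : ℤ | ∃ S : Finset V, IsPacking2 G S ∧ d = diffSet G S} := by
    refine ⟨(packNum G : ℤ) * ((G.minDegree : ℤ) - 1)
        + 2 * G.edgeFinset.card - (Fintype.card V : ℤ) * G.minDegree, ?_⟩
    rintro d ⟨S, hS, rfl⟩
    exact diff_le h hS
  have hle : pdiff2 G ≤ (packNum G : ℤ) * ((G.minDegree : ℤ) - 1)
      + 2 * G.edgeFinset.card - (Fintype.card V : ℤ) * G.minDegree := by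
    apply csSup_le (pdiff2_set_nonempty G)
    rintro d ⟨S, hS, rfl⟩
    exact diff_le h hS
  refine ⟨hle, ?_, ?_⟩
  · intro heq
    obtain ⟨S, hS, hSd⟩ :=
      (pdiff2_set_nonempty G).csSup_mem (pdiff2_set_finite G)
    have hSd' : pdiff2 G = diffSet G S := hSd
    have hDS : diffSet G S = (packNum G : ℤ) * ((G.minDegree : ℤ) - 1)
        + 2 * G.edgeFinset.card - (Fintype.card V : ℤ) * G.minDegree :=
      hSd'.symm.trans heq
    have hid := diff_identity hS
    have h1 := term1_nonneg h hS
    have h2 := term2_nonneg G S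
    have e1 : ((packNum G : ℤ) - S.card) * ((G.minDegree : ℤ) - 1) = 0 := by linarith
    have e2 : (∑ v ∈ Sᶜ, (G.degree v : ℤ)) = (Sᶜ.card : ℤ) * G.minDegree := by linarith
    have hdeg : ∀ v ∉ S, G.degree v = G.minDegree := by
      intro v hv
      by_contra hne
      have hlt : G.minDegree < G.degree v :=
        lt_of_le_of_ne (G.minDegree_le_degree v) (Ne.symm hne)
      have hvS : v ∈ Sᶜ := Finset.mem_compl.2 hv
      have hlt2 : ∑ _x ∈ Sᶜ, G.minDegree < ∑ x ∈ Sᶜ, G.degree x :=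
        Finset.sum_lt_sum (fun i _ => G.minDegree_le_degree i) ⟨v, hvS, hlt⟩
      rw [Finset.sum_const, smul_eq_mul] at hlt2
      have hlt3 : ((Sᶜ.card * G.minDegree : ℕ) : ℤ) < ((∑ x ∈ Sᶜ, G.degree x : ℕ) : ℤ) := by
        exact_mod_cast hlt2
      push_cast at hlt3
      linarith
    rcases eq_or_ne ((G.minDegree : ℤ) - 1) 0 with hδ1 | hδ1
    · have hδ : G.minDegree = 1 := by
        have : (G.minDegree : ℤ) = 1 := by linarith
        exact_mod_cast this
      obtain ⟨T, hT, hTc⟩ := exists_packNum G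
      obtain ⟨S', hS', hsub, hcard⟩ :=
        exists_big_packing hS hT (fun v hv => by rw [hdeg v hv, hδ])
      refine ⟨S', hS', Nat.le_antisymm (card_le_packNum hS') (hTc ▸ hcard), ?_⟩
      intro v hv
      exact hdeg v (fun hvS => hv (hsub hvS))
    · have hcard : (packNum G : ℤ) = S.card := by
        rcases mul_eq_zero.1 e1 with h0 | h0
        · linarith
        · exact absurd h0 hδ1
      exact ⟨S, hS, by exact_mod_cast hcard.symm, hdeg⟩
  · rintro ⟨S, hS, hScard, hdeg⟩
    have e2 : (∑ v ∈ Sᶜ, (G.degree v : ℤ)) = (Sᶜ.card : ℤ) * G.minDegree := by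
      rw [Finset.sum_congr rfl (fun v hv => by rw [hdeg v (Finset.mem_compl.1 hv)])]
      rw [Finset.sum_const, nsmul_eq_mul]
    have hid := diff_identity hS
    rw [hScard] at hid
    ring_nf at hid
    have hDd : (packNum G : ℤ) * ((G.minDegree : ℤ) - 1)
        + 2 * G.edgeFinset.card - (Fintype.card V : ℤ) * G.minDegree = diffSet G S := by
      ring_nf
      linarith
    have hD_le : (packNum G : ℤ) * ((G.minDegree : ℤ) - 1)
        + 2 * G.edgeFinset.card - (Fintype.card V : ℤ) * G.minDegree ≤ pdiff2 G := by
      rw [hDd]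
      exact le_csSup hbdd ⟨S, hS, rfl⟩
    exact le_antisymm hle hD_le
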